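/- (RTO surrogate bound, Theorem 3) Let Δ^{P',P_φ}(π) = J(P',π) - J(P_φ,π) and define L_{φ'}(φ) = Σ_{t=0}^∞ γ^t E_{(s_t,a_t)∼(P',π)}[ E_{s_{t+1}∼P'}[r_t + γ V^{P_{φ'},π}(s_{t+1})] - E_{s_{t+1}∼P_φ}[r_t + γ V^{P_{φ'},π}(s_{t+1})] ]. Then |Δ^{P',P_φ}(π)| ≤ |L_{φ'}(φ)| + (4γ δ₁ r_max/(1-γ)²) · min( δ₁(γ²+1)/(1-γ), 1 ), where δ₁ = max_{s,a} D_TV(P'(·|s,a), P_φ(·|s,a)) (and the TV distance between P_φ and P_{φ'} is bounded by δ₁ as well). -/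

import Mathlib

open scoped BigOperators

variable {S A : Type*}

/-- `P` is a transition kernel: for each state-action pair, a probability
distribution over next states. -/
def IsKernel [Fintype S] (P : S → A → S → ℝ) : Prop :=
  ∀ s a, (∀ s', 0 ≤ P s a s') ∧ ∑ s', P s a s' = 1

/-- `π` is a stochastic policy: for each state, a probability distribution over actions. -/
def IsPolicy [Fintype A] (π : S → A → ℝ) : Prop :=
  ∀ s, (∀ a, 0 ≤ π s a) ∧ ∑ a, π s a = 1

/-- `ρ` is a probability distribution over states. -/
def IsDist [Fintype S] (ρ : S → ℝ) : Prop :=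
  (∀ s, 0 ≤ ρ s) ∧ ∑ s, ρ s = 1

/-- One step of the state-marginal evolution under kernel `P` and policy `π`. -/
noncomputable def stepMarginal [Fintype S] [Fintype A]
    (P : S → A → S → ℝ) (π : S → A → ℝ) (μ : S → ℝ) : S → ℝ :=
  fun s' => ∑ s, μ s * ∑ a, π s a * P s a s'

/-- The time-`t` state marginal under kernel `P`, policy `π`, initial distribution `ρ`. -/
noncomputable def marginal [Fintype S] [Fintype A]
    (P : S → A → S → ℝ) (π : S → A → ℝ) (ρ : S → ℝ) : ℕ → S → ℝ
  | 0 => ρ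
  | t + 1 => stepMarginal P π (marginal P π ρ t)

/-- Expected one-step reward when the current state is distributed according to `μ`. -/
noncomputable def expReward [Fintype S] [Fintype A]
    (P : S → A → S → ℝ) (π : S → A → ℝ) (r : S → A → S → ℝ) (μ : S → ℝ) : ℝ :=
  ∑ s, μ s * ∑ a, π s a * ∑ s', P s a s' * r s a s'

/-- The expected discounted return `J(P, π)` with initial distribution `ρ`. -/
noncomputable def Jret [Fintype S] [Fintype A]
    (P : S → A → S → ℝ) (π : S → A → ℝ) (r : S → A → S → ℝ) (γ : ℝ) (ρ : S → ℝ) : ℝ :=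
  ∑' t : ℕ, γ ^ t * expReward P π r (marginal P π ρ t)

/-- The value function `V^{P,π}(s)`: the return starting from state `s`. -/
noncomputable def Vval [Fintype S] [Fintype A] [DecidableEq S]
    (P : S → A → S → ℝ) (π : S → A → ℝ) (r : S → A → S → ℝ) (γ : ℝ) (s : S) : ℝ :=
  Jret P π r γ (fun s' => if s' = s then 1 else 0)

/-- The state-action value function `Q^{P,π}(s,a)`. -/
noncomputable def Qval [Fintype S] [Fintype A] [DecidableEq S]
    (P : S → A → S → ℝ) (π : S → A → ℝ) (r : S → A → S → ℝ) (γ : ℝ) (s : S) (a : A) : ℝ :=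
  ∑ s', P s a s' * (r s a s' + γ * Vval P π r γ s')

/-- The advantage function `A^{P,π}(s,a) = Q^{P,π}(s,a) - V^{P,π}(s)`. -/
noncomputable def Aval [Fintype S] [Fintype A] [DecidableEq S]
    (P : S → A → S → ℝ) (π : S → A → ℝ) (r : S → A → S → ℝ) (γ : ℝ) (s : S) (a : A) : ℝ :=
  Qval P π r γ s a - Vval P π r γ s
set_option linter.unusedSectionVars false
set_option maxHeartbeats 1000000

section helpers
variable [Fintype S] [Fintype A] [DecidableEq S]

lemma marginal_isDist {P : S → A → S → ℝ} {π : S → A → ℝ} {ρ : S → ℝ}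
    (hP : IsKernel P) (hπ : IsPolicy π) (hρ : IsDist ρ) (t : ℕ) :
    IsDist (marginal P π ρ t) := by
  induction t with
  | zero => exact hρ
  | succ t ih =>
    constructor
    · intro s'
      exact Finset.sum_nonneg fun s _ => mul_nonneg (ih.1 s)
        (Finset.sum_nonneg fun a _ => mul_nonneg ((hπ s).1 a) ((hP s a).1 s'))
    · show ∑ s', ∑ s, marginal P π ρ t s * ∑ a, π s a * P s a s' = 1
      rw [Finset.sum_comm]
      calc ∑ s, ∑ s', marginal P π ρ t s * ∑ a, π s a * P s a s'
          = ∑ s, marginal P π ρ t s * ∑ a, π s a * ∑ s', P s a s' := by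
            refine Finset.sum_congr rfl fun s _ => ?_
            rw [← Finset.mul_sum, Finset.sum_comm]
            congr 1
            exact Finset.sum_congr rfl fun a _ => (Finset.mul_sum _ _ _).symm
        _ = 1 := by
            simp_rw [fun s a => (hP s a).2, mul_one, fun s => (hπ s).2, mul_one]
            exact ih.2

lemma expReward_abs_le {P : S → A → S → ℝ} {π : S → A → ℝ} {r : S → A → S → ℝ}
    {μ : S → ℝ} {rmax : ℝ}
    (hP : IsKernel P) (hπ : IsPolicy π) (hμ : IsDist μ) (hr : ∀ s a s', |r s a s'| ≤ rmax) :
    |expReward P π r μ| ≤ rmax := by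
  have h1 : ∀ s a, |∑ s', P s a s' * r s a s'| ≤ rmax := by
    intro s a
    calc |∑ s', P s a s' * r s a s'| ≤ ∑ s', |P s a s' * r s a s'| :=
          Finset.abs_sum_le_sum_abs _ _
      _ ≤ ∑ s', P s a s' * rmax := by
          refine Finset.sum_le_sum fun s' _ => ?_
          rw [abs_mul, abs_of_nonneg ((hP s a).1 s')]
          exact mul_le_mul_of_nonneg_left (hr s a s') ((hP s a).1 s')
      _ = rmax := by rw [← Finset.sum_mul, (hP s a).2, one_mul]
  have h2 : ∀ s, |∑ a, π s a * ∑ s', P s a s' * r s a s'| ≤ rmax := by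
    intro s
    calc |∑ a, π s a * ∑ s', P s a s' * r s a s'| ≤ ∑ a, |π s a * ∑ s', P s a s' * r s a s'| :=
          Finset.abs_sum_le_sum_abs _ _
      _ ≤ ∑ a, π s a * rmax := by
          refine Finset.sum_le_sum fun a _ => ?_
          rw [abs_mul, abs_of_nonneg ((hπ s).1 a)]
          exact mul_le_mul_of_nonneg_left (h1 s a) ((hπ s).1 a)
      _ = rmax := by rw [← Finset.sum_mul, (hπ s).2, one_mul]
  calc |expReward P π r μ| ≤ ∑ s, |μ s * ∑ a, π s a * ∑ s', P s a s' * r s a s'| :=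
        Finset.abs_sum_le_sum_abs _ _
    _ ≤ ∑ s, μ s * rmax := by
        refine Finset.sum_le_sum fun s _ => ?_
        rw [abs_mul, abs_of_nonneg (hμ.1 s)]
        exact mul_le_mul_of_nonneg_left (h2 s) (hμ.1 s)
    _ = rmax := by rw [← Finset.sum_mul, hμ.2, one_mul]


lemma summable_geom_bound {g : ℕ → ℝ} {C γ : ℝ} (hγ0 : 0 ≤ γ) (hγ1 : γ < 1)
    (hg : ∀ t, |g t| ≤ C) : Summable (fun t => γ ^ t * g t) := by
  refine Summable.of_abs (Summable.of_nonneg_of_le (fun t => abs_nonneg _) (fun t => ?_)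
    ((summable_geometric_of_lt_one hγ0 hγ1).mul_right C))
  rw [abs_mul, abs_of_nonneg (pow_nonneg hγ0 t)]
  exact mul_le_mul_of_nonneg_left (hg t) (pow_nonneg hγ0 t)

lemma tsum_geom_bound {g : ℕ → ℝ} {C γ : ℝ} (hγ0 : 0 ≤ γ) (hγ1 : γ < 1)
    (hg : ∀ t, |g t| ≤ C) : |∑' t, γ ^ t * g t| ≤ C / (1 - γ) := by
  have hsum := summable_geom_bound hγ0 hγ1 hg
  have habs : Summable (fun t => |γ ^ t * g t|) := hsum.abs
  calc |∑' t, γ ^ t * g t| ≤ ∑' t, |γ ^ t * g t| := by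
        have := norm_tsum_le_tsum_norm (f := fun t => γ ^ t * g t)
          (by simpa only [Real.norm_eq_abs] using habs)
        simpa only [Real.norm_eq_abs] using this
    _ ≤ ∑' t, γ ^ t * C := by
        refine Summable.tsum_le_tsum (fun t => ?_) habs
          ((summable_geometric_of_lt_one hγ0 hγ1).mul_right C)
        rw [abs_mul, abs_of_nonneg (pow_nonneg hγ0 t)]
        exact mul_le_mul_of_nonneg_left (hg t) (pow_nonneg hγ0 t)
    _ = C / (1 - γ) := by
        rw [tsum_mul_right, tsum_geometric_of_lt_one hγ0 hγ1, div_eq_inv_mul, mul_comm]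

lemma marginal_shift {P : S → A → S → ℝ} {π : S → A → ℝ} (ρ : S → ℝ) (t : ℕ) :
    marginal P π ρ (t + 1) = marginal P π (stepMarginal P π ρ) t := by
  induction t with
  | zero => rfl
  | succ t ih => show stepMarginal P π _ = _; rw [ih]; rfl

lemma summable_ret {P : S → A → S → ℝ} {π : S → A → ℝ} {r : S → A → S → ℝ}
    {γ rmax : ℝ} {ρ : S → ℝ}
    (hP : IsKernel P) (hπ : IsPolicy π) (hρ : IsDist ρ) (hγ0 : 0 ≤ γ) (hγ1 : γ < 1)
    (hr : ∀ s a s', |r s a s'| ≤ rmax) :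
    Summable (fun t => γ ^ t * expReward P π r (marginal P π ρ t)) :=
  summable_geom_bound hγ0 hγ1 fun t =>
    expReward_abs_le hP hπ (marginal_isDist hP hπ hρ t) hr

lemma Jret_abs_le {P : S → A → S → ℝ} {π : S → A → ℝ} {r : S → A → S → ℝ}
    {γ rmax : ℝ} {ρ : S → ℝ}
    (hP : IsKernel P) (hπ : IsPolicy π) (hρ : IsDist ρ) (hγ0 : 0 ≤ γ) (hγ1 : γ < 1)
    (hr : ∀ s a s', |r s a s'| ≤ rmax) :
    |Jret P π r γ ρ| ≤ rmax / (1 - γ) :=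
  tsum_geom_bound hγ0 hγ1 fun t => expReward_abs_le hP hπ (marginal_isDist hP hπ hρ t) hr

lemma stepMarginal_isDist {P : S → A → S → ℝ} {π : S → A → ℝ} {ρ : S → ℝ}
    (hP : IsKernel P) (hπ : IsPolicy π) (hρ : IsDist ρ) :
    IsDist (stepMarginal P π ρ) := marginal_isDist hP hπ hρ 1

lemma Jret_bellman {P : S → A → S → ℝ} {π : S → A → ℝ} {r : S → A → S → ℝ}
    {γ rmax : ℝ} {ρ : S → ℝ}
    (hP : IsKernel P) (hπ : IsPolicy π) (hρ : IsDist ρ) (hγ0 : 0 ≤ γ) (hγ1 : γ < 1)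
    (hr : ∀ s a s', |r s a s'| ≤ rmax) :
    Jret P π r γ ρ = expReward P π r ρ + γ * Jret P π r γ (stepMarginal P π ρ) := by
  have hsum := summable_ret hP hπ hρ hγ0 hγ1 hr (γ := γ) (r := r)
  rw [Jret, Summable.tsum_eq_zero_add hsum]
  simp only [pow_zero, one_mul]
  have h : ∀ b : ℕ, γ ^ (b + 1) * expReward P π r (marginal P π ρ (b + 1))
      = γ * (γ ^ b * expReward P π r (marginal P π (stepMarginal P π ρ) b)) := by
    intro b; rw [marginal_shift]; ring
  rw [tsum_congr h, tsum_mul_left]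
  rfl

def dirac (s : S) : S → ℝ := fun s' => if s' = s then 1 else 0

lemma dirac_isDist (s : S) : IsDist (dirac s) := by
  constructor
  · intro s'; unfold dirac; split <;> norm_num
  · simp [dirac]

lemma Vval_eq (P : S → A → S → ℝ) (π : S → A → ℝ) (r : S → A → S → ℝ) (γ : ℝ) (s : S) :
    Vval P π r γ s = Jret P π r γ (dirac s) := rfl

lemma Vval_abs_le {P : S → A → S → ℝ} {π : S → A → ℝ} {r : S → A → S → ℝ}
    {γ rmax : ℝ}
    (hP : IsKernel P) (hπ : IsPolicy π) (hγ0 : 0 ≤ γ) (hγ1 : γ < 1)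
    (hr : ∀ s a s', |r s a s'| ≤ rmax) (s : S) :
    |Vval P π r γ s| ≤ rmax / (1 - γ) := by
  rw [Vval_eq]
  exact Jret_abs_le hP hπ (dirac_isDist s) hγ0 hγ1 hr


lemma marginal_linear {P : S → A → S → ℝ} {π : S → A → ℝ} (ρ : S → ℝ) :
    ∀ t s, marginal P π ρ t s = ∑ s0, ρ s0 * marginal P π (dirac s0) t s := by
  intro t
  induction t with
  | zero =>
      intro s
      show ρ s = ∑ s0, ρ s0 * dirac s0 s
      simp [dirac, mul_ite, Finset.sum_ite_eq]
  | succ t ih =>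
      intro s'
      show stepMarginal P π (marginal P π ρ t) s' = _
      calc stepMarginal P π (marginal P π ρ t) s'
          = ∑ s, (∑ s0, ρ s0 * marginal P π (dirac s0) t s) * ∑ a, π s a * P s a s' := by
            unfold stepMarginal; simp_rw [ih]
        _ = ∑ s0, ρ s0 * stepMarginal P π (marginal P π (dirac s0) t) s' := by
            unfold stepMarginal
            simp_rw [Finset.sum_mul, Finset.mul_sum, mul_assoc]
            rw [Finset.sum_comm]
        _ = ∑ s0, ρ s0 * marginal P π (dirac s0) (t + 1) s' := rfl

lemma expReward_linear {P : S → A → S → ℝ} {π : S → A → ℝ} {r : S → A → S → ℝ}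
    (ρ : S → ℝ) (t : ℕ) :
    expReward P π r (marginal P π ρ t)
      = ∑ s0, ρ s0 * expReward P π r (marginal P π (dirac s0) t) := by
  unfold expReward
  simp_rw [marginal_linear ρ t, Finset.sum_mul, Finset.mul_sum, mul_assoc]
  rw [Finset.sum_comm]

lemma Jret_linear {P : S → A → S → ℝ} {π : S → A → ℝ} {r : S → A → S → ℝ}
    {γ rmax : ℝ} (ρ : S → ℝ)
    (hP : IsKernel P) (hπ : IsPolicy π) (hγ0 : 0 ≤ γ) (hγ1 : γ < 1)
    (hr : ∀ s a s', |r s a s'| ≤ rmax) :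
    Jret P π r γ ρ = ∑ s0, ρ s0 * Vval P π r γ s0 := by
  have h : ∀ t : ℕ, γ ^ t * expReward P π r (marginal P π ρ t)
      = ∑ s0, ρ s0 * (γ ^ t * expReward P π r (marginal P π (dirac s0) t)) := by
    intro t
    rw [expReward_linear ρ t, Finset.mul_sum]
    refine Finset.sum_congr rfl fun s0 _ => by ring
  rw [Jret, tsum_congr h, Summable.tsum_finsetSum (fun s0 _ =>
    Summable.mul_left _ (summable_ret hP hπ (dirac_isDist s0) hγ0 hγ1 hr))]
  refine Finset.sum_congr rfl fun s0 _ => ?_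
  rw [tsum_mul_left, Vval_eq, Jret]

lemma expReward_dirac {P : S → A → S → ℝ} {π : S → A → ℝ} {r : S → A → S → ℝ} (s : S) :
    expReward P π r (dirac s) = ∑ a, π s a * ∑ s', P s a s' * r s a s' := by
  unfold expReward dirac
  simp [ite_mul, Finset.sum_ite_eq']

lemma stepMarginal_dirac {P : S → A → S → ℝ} {π : S → A → ℝ} (s : S) (s' : S) :
    stepMarginal P π (dirac s) s' = ∑ a, π s a * P s a s' := by
  unfold stepMarginal dirac
  simp [ite_mul, Finset.sum_ite_eq']

lemma Vval_bellman {P : S → A → S → ℝ} {π : S → A → ℝ} {r : S → A → S → ℝ}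
    {γ rmax : ℝ}
    (hP : IsKernel P) (hπ : IsPolicy π) (hγ0 : 0 ≤ γ) (hγ1 : γ < 1)
    (hr : ∀ s a s', |r s a s'| ≤ rmax) (s : S) :
    Vval P π r γ s = ∑ a, π s a * ∑ s', P s a s' * (r s a s' + γ * Vval P π r γ s') := by
  rw [Vval_eq, Jret_bellman hP hπ (dirac_isDist s) hγ0 hγ1 hr,
      Jret_linear (stepMarginal P π (dirac s)) hP hπ hγ0 hγ1 hr, expReward_dirac]
  simp_rw [stepMarginal_dirac]
  have key : γ * ∑ x, (∑ a, π s a * P s a x) * Vval P π r γ x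
      = ∑ a, π s a * ∑ s', P s a s' * (γ * Vval P π r γ s') := by
    calc γ * ∑ x, (∑ a, π s a * P s a x) * Vval P π r γ x
        = ∑ x, ∑ a, π s a * (P s a x * (γ * Vval P π r γ x)) := by
          rw [Finset.mul_sum]
          refine Finset.sum_congr rfl fun x _ => ?_
          rw [Finset.sum_mul, Finset.mul_sum]
          refine Finset.sum_congr rfl fun a _ => by ring
      _ = ∑ a, ∑ x, π s a * (P s a x * (γ * Vval P π r γ x)) := Finset.sum_comm
      _ = ∑ a, π s a * ∑ s', P s a s' * (γ * Vval P π r γ s') := by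
          refine Finset.sum_congr rfl fun a _ => (Finset.mul_sum _ _ _).symm
  rw [key, ← Finset.sum_add_distrib]
  refine Finset.sum_congr rfl fun a _ => ?_
  rw [← mul_add, ← Finset.sum_add_distrib]
  congr 1
  refine Finset.sum_congr rfl fun s' _ => by ring


lemma weighted_abs_le {ι : Type*} [Fintype ι] {w x : ι → ℝ} {c : ℝ}
    (h0 : ∀ i, 0 ≤ w i) (h1 : ∑ i, w i = 1) (hx : ∀ i, |x i| ≤ c) :
    |∑ i, w i * x i| ≤ c := by
  calc |∑ i, w i * x i| ≤ ∑ i, |w i * x i| := Finset.abs_sum_le_sum_abs _ _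
    _ ≤ ∑ i, w i * c := Finset.sum_le_sum fun i _ => by
        rw [abs_mul, abs_of_nonneg (h0 i)]
        exact mul_le_mul_of_nonneg_left (hx i) (h0 i)
    _ = c := by rw [← Finset.sum_mul, h1, one_mul]

lemma tv_weighted_abs_le {ι : Type*} [Fintype ι] {p q x : ι → ℝ} {δ c : ℝ}
    (hδ : (1 / 2) * ∑ i, |p i - q i| ≤ δ) (hc : 0 ≤ c) (hx : ∀ i, |x i| ≤ c) :
    |∑ i, (p i - q i) * x i| ≤ 2 * δ * c := by
  calc |∑ i, (p i - q i) * x i| ≤ ∑ i, |(p i - q i) * x i| := Finset.abs_sum_le_sum_abs _ _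
    _ ≤ ∑ i, |p i - q i| * c := Finset.sum_le_sum fun i _ => by
        rw [abs_mul]
        exact mul_le_mul_of_nonneg_left (hx i) (abs_nonneg _)
    _ = (∑ i, |p i - q i|) * c := (Finset.sum_mul _ _ _).symm
    _ ≤ (2 * δ) * c := by
        refine mul_le_mul_of_nonneg_right ?_ hc
        linarith
    _ = 2 * δ * c := by ring

lemma Vval_diff_bound {P1 P2 : S → A → S → ℝ} {π : S → A → ℝ} {r : S → A → S → ℝ}
    {γ rmax δ : ℝ} [Nonempty S]
    (hP1 : IsKernel P1) (hP2 : IsKernel P2) (hπ : IsPolicy π)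
    (hγ0 : 0 ≤ γ) (hγ1 : γ < 1) (hr : ∀ s a s', |r s a s'| ≤ rmax) (hrm : 0 ≤ rmax)
    (hδ : ∀ s a, (1 / 2) * ∑ s', |P1 s a s' - P2 s a s'| ≤ δ) (s : S) :
    |Vval P1 π r γ s - Vval P2 π r γ s| ≤ 2 * δ * rmax / (1 - γ) ^ 2 := by
  have h1γ : 0 < 1 - γ := by linarith
  set V1 := Vval P1 π r γ with hV1
  set V2 := Vval P2 π r γ with hV2
  set M := Finset.univ.sup' (Finset.univ_nonempty (α := S)) (fun s => |V1 s - V2 s|) with hM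
  have hMle : ∀ s : S, |V1 s - V2 s| ≤ M := fun s =>
    Finset.le_sup' (f := fun s => |V1 s - V2 s|) (Finset.mem_univ s)
  have hrg : rmax + γ * (rmax / (1 - γ)) = rmax / (1 - γ) := by
    field_simp
    ring
  have hstep : ∀ s : S, |V1 s - V2 s| ≤ 2 * δ * (rmax / (1 - γ)) + γ * M := by
    intro s
    rw [hV1, hV2, Vval_bellman hP1 hπ hγ0 hγ1 hr s, Vval_bellman hP2 hπ hγ0 hγ1 hr s,
      ← Finset.sum_sub_distrib]
    have hre : ∀ a : A, π s a * (∑ s', P1 s a s' * (r s a s' + γ * Vval P1 π r γ s'))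
        - π s a * (∑ s', P2 s a s' * (r s a s' + γ * Vval P2 π r γ s'))
        = π s a * ((∑ s', P1 s a s' * (r s a s' + γ * Vval P1 π r γ s'))
            - ∑ s', P2 s a s' * (r s a s' + γ * Vval P2 π r γ s')) := fun a => (mul_sub _ _ _).symm
    rw [Finset.sum_congr rfl fun a _ => hre a]
    refine weighted_abs_le (hπ s).1 (hπ s).2 fun a => ?_
    have hsplit : (∑ s', P1 s a s' * (r s a s' + γ * Vval P1 π r γ s'))
        - ∑ s', P2 s a s' * (r s a s' + γ * Vval P2 π r γ s')
        = (∑ s', (P1 s a s' - P2 s a s') * (r s a s' + γ * Vval P2 π r γ s'))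
          + γ * ∑ s', P1 s a s' * (Vval P1 π r γ s' - Vval P2 π r γ s') := by
      rw [← Finset.sum_sub_distrib, Finset.mul_sum, ← Finset.sum_add_distrib]
      refine Finset.sum_congr rfl fun s' _ => by ring
    rw [hsplit]
    refine (abs_add_le _ _).trans ?_
    have hb1 : |∑ s', (P1 s a s' - P2 s a s') * (r s a s' + γ * Vval P2 π r γ s')|
        ≤ 2 * δ * (rmax / (1 - γ)) := by
      refine tv_weighted_abs_le (hδ s a) (div_nonneg hrm h1γ.le) fun s' => ?_
      calc |r s a s' + γ * Vval P2 π r γ s'| ≤ |r s a s'| + γ * |Vval P2 π r γ s'| := by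
            refine (abs_add_le _ _).trans ?_
            rw [abs_mul, abs_of_nonneg hγ0]
        _ ≤ rmax + γ * (rmax / (1 - γ)) := by
            refine add_le_add (hr s a s') (mul_le_mul_of_nonneg_left ?_ hγ0)
            exact Vval_abs_le hP2 hπ hγ0 hγ1 hr s'
        _ = rmax / (1 - γ) := hrg
    have hb2 : |∑ s', P1 s a s' * (Vval P1 π r γ s' - Vval P2 π r γ s')| ≤ M :=
      weighted_abs_le (hP1 s a).1 (hP1 s a).2 fun s' => hMle s'
    have : |γ * ∑ s', P1 s a s' * (Vval P1 π r γ s' - Vval P2 π r γ s')| ≤ γ * M := by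
      rw [abs_mul, abs_of_nonneg hγ0]
      exact mul_le_mul_of_nonneg_left hb2 hγ0
    linarith
  have hMb : M ≤ 2 * δ * rmax / (1 - γ) ^ 2 := by
    obtain ⟨s0, -, hs0⟩ := Finset.exists_mem_eq_sup' (Finset.univ_nonempty (α := S))
      (fun s => |V1 s - V2 s|)
    have h2 : M * (1 - γ) ≤ 2 * δ * (rmax / (1 - γ)) := by
      have := hstep s0
      rw [← hs0] at this
      linarith
    have h3 : M ≤ 2 * δ * (rmax / (1 - γ)) / (1 - γ) := by
      rw [le_div_iff₀ h1γ]
      exact h2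
    calc M ≤ 2 * δ * (rmax / (1 - γ)) / (1 - γ) := h3
      _ = 2 * δ * rmax / (1 - γ) ^ 2 := by rw [mul_div_assoc', div_div, ← sq]
  exact (hMle s).trans hMb


lemma per_state_split (P : S → A → S → ℝ) (π : S → A → ℝ) (r : S → A → S → ℝ)
    (γ : ℝ) (W : S → ℝ) (s : S) :
    ∑ a, π s a * ∑ s', P s a s' * (r s a s' + γ * W s')
    = (∑ a, π s a * ∑ s', P s a s' * r s a s')
      + γ * ∑ s', (∑ a, π s a * P s a s') * W s' := by
  have key : γ * ∑ x, (∑ a, π s a * P s a x) * W x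
      = ∑ a, π s a * ∑ s', P s a s' * (γ * W s') := by
    calc γ * ∑ x, (∑ a, π s a * P s a x) * W x
        = ∑ x, ∑ a, π s a * (P s a x * (γ * W x)) := by
          rw [Finset.mul_sum]
          refine Finset.sum_congr rfl fun x _ => ?_
          rw [Finset.sum_mul, Finset.mul_sum]
          refine Finset.sum_congr rfl fun a _ => by ring
      _ = ∑ a, ∑ x, π s a * (P s a x * (γ * W x)) := Finset.sum_comm
      _ = ∑ a, π s a * ∑ s', P s a s' * (γ * W s') := by
          refine Finset.sum_congr rfl fun a _ => (Finset.mul_sum _ _ _).symm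
  rw [key, ← Finset.sum_add_distrib]
  refine Finset.sum_congr rfl fun a _ => ?_
  rw [← mul_add, ← Finset.sum_add_distrib]
  congr 1
  exact Finset.sum_congr rfl fun s' _ => by ring

lemma sim_identity {P' Pφ : S → A → S → ℝ} {π : S → A → ℝ} {r : S → A → S → ℝ}
    {γ rmax : ℝ} {ρ : S → ℝ}
    (hP' : IsKernel P') (hPφ : IsKernel Pφ) (hπ : IsPolicy π) (hρ : IsDist ρ)
    (hγ0 : 0 ≤ γ) (hγ1 : γ < 1) (hr : ∀ s a s', |r s a s'| ≤ rmax) :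
    Jret P' π r γ ρ - Jret Pφ π r γ ρ
      = ∑' t : ℕ, γ ^ t * ∑ s, marginal P' π ρ t s * ∑ a, π s a *
          ((∑ s', P' s a s' * (r s a s' + γ * Vval Pφ π r γ s')) -
            ∑ s', Pφ s a s' * (r s a s' + γ * Vval Pφ π r γ s')) := by
  have h1γ : 0 < 1 - γ := by linarith
  have hμ : ∀ t, IsDist (marginal P' π ρ t) := marginal_isDist hP' hπ hρ
  set a : ℕ → ℝ := fun t => γ ^ t * ∑ s, marginal P' π ρ t s * Vval Pφ π r γ s with ha
  have hWb : ∀ t, |∑ s, marginal P' π ρ t s * Vval Pφ π r γ s| ≤ rmax / (1 - γ) :=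
    fun t => weighted_abs_le (hμ t).1 (hμ t).2 (Vval_abs_le hPφ hπ hγ0 hγ1 hr)
  have ha_sum : Summable a := summable_geom_bound hγ0 hγ1 hWb
  have ha_shift : Summable (fun t => a (t + 1)) := (summable_nat_add_iff 1).mpr ha_sum
  have hd_sum : Summable (fun t => a (t + 1) - a t) := ha_shift.sub ha_sum
  have ha0 : Filter.Tendsto a Filter.atTop (nhds 0) := by
    refine squeeze_zero_norm (a := fun t => γ ^ t * (rmax / (1 - γ))) (fun t => ?_) ?_
    · show ‖a t‖ ≤ γ ^ t * (rmax / (1 - γ))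
      rw [Real.norm_eq_abs, ha, abs_mul, abs_of_nonneg (pow_nonneg hγ0 t)]
      exact mul_le_mul_of_nonneg_left (hWb t) (pow_nonneg hγ0 t)
    · have := (tendsto_pow_atTop_nhds_zero_of_lt_one hγ0 hγ1).mul_const (rmax / (1 - γ))
      simpa using this
  have htel : ∑' t, (a (t + 1) - a t) = -a 0 := by
    have h1 := hd_sum.hasSum.tendsto_sum_nat
    have h2 : ∀ n, ∑ i ∈ Finset.range n, (a (i + 1) - a i) = a n - a 0 :=
      fun n => Finset.sum_range_sub a n
    have h3 : Filter.Tendsto (fun n => ∑ i ∈ Finset.range n, (a (i + 1) - a i))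
        Filter.atTop (nhds (0 - a 0)) := by
      simp_rw [h2]
      exact ha0.sub tendsto_const_nhds
    rw [tendsto_nhds_unique h1 h3]
    ring
  have hsum' : Summable (fun t => γ ^ t * expReward P' π r (marginal P' π ρ t)) :=
    summable_ret hP' hπ hρ hγ0 hγ1 hr
  have c2 : ∀ t, ∑ s, marginal P' π ρ t s * ∑ a, π s a *
      ∑ s', Pφ s a s' * (r s a s' + γ * Vval Pφ π r γ s')
      = ∑ s, marginal P' π ρ t s * Vval Pφ π r γ s :=
    fun t => Finset.sum_congr rfl fun s _ => by
      rw [← Vval_bellman hPφ hπ hγ0 hγ1 hr s]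
  have c1 : ∀ t : ℕ,
      ∑ s, marginal P' π ρ t s * ∑ a, π s a *
        ∑ s', P' s a s' * (r s a s' + γ * Vval Pφ π r γ s')
      = expReward P' π r (marginal P' π ρ t)
        + γ * ∑ s', marginal P' π ρ (t + 1) s' * Vval Pφ π r γ s' := by
    intro t
    simp_rw [per_state_split P' π r γ (Vval Pφ π r γ)]
    have hm1 : ∀ s' : S, marginal P' π ρ (t + 1) s'
        = ∑ s, marginal P' π ρ t s * ∑ a, π s a * P' s a s' := fun s' => rfl
    simp_rw [hm1, mul_add]
    rw [Finset.sum_add_distrib]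
    congr 1
    calc ∑ s, marginal P' π ρ t s * (γ * ∑ s', (∑ a, π s a * P' s a s') * Vval Pφ π r γ s')
        = ∑ s, ∑ s', γ * (marginal P' π ρ t s * ((∑ a, π s a * P' s a s') * Vval Pφ π r γ s')) := by
          refine Finset.sum_congr rfl fun s _ => ?_
          rw [Finset.mul_sum, Finset.mul_sum]
          exact Finset.sum_congr rfl fun s' _ => by ring
      _ = ∑ s', ∑ s, γ * (marginal P' π ρ t s * ((∑ a, π s a * P' s a s') * Vval Pφ π r γ s')) :=
          Finset.sum_comm
      _ = γ * ∑ s', (∑ s, marginal P' π ρ t s * ∑ a, π s a * P' s a s') * Vval Pφ π r γ s' := by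
          rw [Finset.mul_sum]
          refine Finset.sum_congr rfl fun s' _ => ?_
          rw [Finset.sum_mul, Finset.mul_sum]
          exact Finset.sum_congr rfl fun s _ => by ring
  have hsplit_sub : ∀ t, ∑ s, marginal P' π ρ t s * ∑ a, π s a *
      ((∑ s', P' s a s' * (r s a s' + γ * Vval Pφ π r γ s')) -
        ∑ s', Pφ s a s' * (r s a s' + γ * Vval Pφ π r γ s'))
      = (∑ s, marginal P' π ρ t s * ∑ a, π s a *
          ∑ s', P' s a s' * (r s a s' + γ * Vval Pφ π r γ s'))
        - ∑ s, marginal P' π ρ t s * ∑ a, π s a *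
          ∑ s', Pφ s a s' * (r s a s' + γ * Vval Pφ π r γ s') := by
    intro t
    rw [← Finset.sum_sub_distrib]
    refine Finset.sum_congr rfl fun s _ => ?_
    rw [← mul_sub, ← Finset.sum_sub_distrib]
    congr 1
    exact Finset.sum_congr rfl fun b _ => mul_sub _ _ _
  have hterm : ∀ t, γ ^ t * (∑ s, marginal P' π ρ t s * ∑ a, π s a *
      ((∑ s', P' s a s' * (r s a s' + γ * Vval Pφ π r γ s')) -
        ∑ s', Pφ s a s' * (r s a s' + γ * Vval Pφ π r γ s')))
      = γ ^ t * expReward P' π r (marginal P' π ρ t) + (a (t + 1) - a t) := by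
    intro t
    rw [hsplit_sub t, c1 t, c2 t, ha]
    ring
  have ha0' : a 0 = Jret Pφ π r γ ρ := by
    rw [Jret_linear ρ hPφ hπ hγ0 hγ1 hr]
    show γ ^ 0 * ∑ s, marginal P' π ρ 0 s * Vval Pφ π r γ s = _
    rw [pow_zero, one_mul]
    rfl
  calc Jret P' π r γ ρ - Jret Pφ π r γ ρ
      = (∑' t, γ ^ t * expReward P' π r (marginal P' π ρ t)) + ∑' t, (a (t + 1) - a t) := by
        rw [htel, ha0']
        show Jret P' π r γ ρ - Jret Pφ π r γ ρ = Jret P' π r γ ρ + -Jret Pφ π r γ ρ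
        ring
    _ = ∑' t, (γ ^ t * expReward P' π r (marginal P' π ρ t) + (a (t + 1) - a t)) :=
        (Summable.tsum_add hsum' hd_sum).symm
    _ = _ := tsum_congr fun t => (hterm t).symm

end helpers

/-- RTO surrogate bound, Theorem 3:
`|Δ^{P',P_φ}(π)| ≤ |L_{φ'}(φ)| + (4γδ₁r_max/(1-γ)²)·min(δ₁(γ²+1)/(1-γ), 1)`. -/
theorem rto_bound [Fintype S] [Fintype A] [DecidableEq S]
    (P' Pφ Pφ' : S → A → S → ℝ) (π : S → A → ℝ) (r : S → A → S → ℝ) (γ : ℝ) (ρ : S → ℝ)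
    (rmax δ₁ : ℝ)
    (hP' : IsKernel P') (hPφ : IsKernel Pφ) (hPφ' : IsKernel Pφ') (hπ : IsPolicy π)
    (hρ : IsDist ρ)
    (hγ0 : 0 ≤ γ) (hγ1 : γ < 1)
    (hr : ∀ s a s', |r s a s'| ≤ rmax)
    (hδ₁ : ∀ s a, (1 / 2) * ∑ s', |P' s a s' - Pφ s a s'| ≤ δ₁)
    (hδ₁' : ∀ s a, (1 / 2) * ∑ s', |Pφ s a s' - Pφ' s a s'| ≤ δ₁) :
    |Jret P' π r γ ρ - Jret Pφ π r γ ρ| ≤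
      |∑' t : ℕ, γ ^ t * ∑ s, marginal P' π ρ t s * ∑ a, π s a *
          ((∑ s', P' s a s' * (r s a s' + γ * Vval Pφ' π r γ s')) -
            ∑ s', Pφ s a s' * (r s a s' + γ * Vval Pφ' π r γ s'))| +
      4 * γ * δ₁ * rmax / (1 - γ) ^ 2 * min (δ₁ * (γ ^ 2 + 1) / (1 - γ)) 1 := by
  have h1γ : 0 < 1 - γ := by linarith
  have hS : Nonempty S := by
    by_contra h
    rw [not_nonempty_iff] at h
    exact absurd hρ.2 (by simp)
  obtain ⟨s₀⟩ := id hS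
  have hA : Nonempty A := by
    by_contra h
    rw [not_nonempty_iff] at h
    exact absurd (hπ s₀).2 (by simp)
  obtain ⟨a₀⟩ := id hA
  have hrm : 0 ≤ rmax := (abs_nonneg _).trans (hr s₀ a₀ s₀)
  have hδ0 : 0 ≤ δ₁ := le_trans (by positivity) (hδ₁ s₀ a₀)
  have hμ : ∀ t, IsDist (marginal P' π ρ t) := marginal_isDist hP' hπ hρ
  -- bound on the value gap
  have hVb : ∀ s, |Vval Pφ π r γ s - Vval Pφ' π r γ s|
      ≤ min (2 * δ₁ * rmax / (1 - γ) ^ 2) (2 * (rmax / (1 - γ))) := by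
    intro s
    refine le_min (Vval_diff_bound hPφ hPφ' hπ hγ0 hγ1 hr hrm hδ₁' s) ?_
    rw [sub_eq_add_neg]
    refine (abs_add_le _ _).trans ?_
    rw [abs_neg]
    have := Vval_abs_le hPφ hπ hγ0 hγ1 hr s
    have := Vval_abs_le hPφ' hπ hγ0 hγ1 hr s
    linarith
  set B := min (2 * δ₁ * rmax / (1 - γ) ^ 2) (2 * (rmax / (1 - γ))) with hB
  have hB0 : 0 ≤ B := le_min (by positivity) (by positivity)
  -- pointwise bound on |r + γ V|
  have hrV : ∀ (P2 : S → A → S → ℝ), IsKernel P2 → ∀ s a s',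
      |r s a s' + γ * Vval P2 π r γ s'| ≤ rmax / (1 - γ) := by
    intro P2 hP2 s a s'
    have hv := Vval_abs_le hP2 hπ hγ0 hγ1 hr s'
    have hrg : rmax + γ * (rmax / (1 - γ)) = rmax / (1 - γ) := by field_simp; ring
    calc |r s a s' + γ * Vval P2 π r γ s'| ≤ |r s a s'| + γ * |Vval P2 π r γ s'| := by
          refine (abs_add_le _ _).trans ?_
          rw [abs_mul, abs_of_nonneg hγ0]
      _ ≤ rmax + γ * (rmax / (1 - γ)) :=
          add_le_add (hr s a s') (mul_le_mul_of_nonneg_left hv hγ0)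
      _ = rmax / (1 - γ) := hrg
  -- per-(s,a) bound on the advantage-style difference
  have hXY : ∀ (P2 : S → A → S → ℝ), IsKernel P2 → ∀ t,
      |∑ s, marginal P' π ρ t s * ∑ a, π s a *
        ((∑ s', P' s a s' * (r s a s' + γ * Vval P2 π r γ s')) -
          ∑ s', Pφ s a s' * (r s a s' + γ * Vval P2 π r γ s'))| ≤ 2 * (rmax / (1 - γ)) := by
    intro P2 hP2 t
    refine weighted_abs_le (hμ t).1 (hμ t).2 fun s => ?_
    refine weighted_abs_le (hπ s).1 (hπ s).2 fun a => ?_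
    have h1 : |∑ s', P' s a s' * (r s a s' + γ * Vval P2 π r γ s')| ≤ rmax / (1 - γ) :=
      weighted_abs_le (hP' s a).1 (hP' s a).2 (hrV P2 hP2 s a)
    have h2 : |∑ s', Pφ s a s' * (r s a s' + γ * Vval P2 π r γ s')| ≤ rmax / (1 - γ) :=
      weighted_abs_le (hPφ s a).1 (hPφ s a).2 (hrV P2 hP2 s a)
    rw [sub_eq_add_neg]
    refine (abs_add_le _ _).trans ?_
    rw [abs_neg]
    linarith
  have hfs : Summable (fun t => γ ^ t * ∑ s, marginal P' π ρ t s * ∑ a, π s a *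
      ((∑ s', P' s a s' * (r s a s' + γ * Vval Pφ π r γ s')) -
        ∑ s', Pφ s a s' * (r s a s' + γ * Vval Pφ π r γ s'))) :=
    summable_geom_bound hγ0 hγ1 (hXY Pφ hPφ)
  have hfs' : Summable (fun t => γ ^ t * ∑ s, marginal P' π ρ t s * ∑ a, π s a *
      ((∑ s', P' s a s' * (r s a s' + γ * Vval Pφ' π r γ s')) -
        ∑ s', Pφ s a s' * (r s a s' + γ * Vval Pφ' π r γ s'))) :=
    summable_geom_bound hγ0 hγ1 (hXY Pφ' hPφ')
  -- per-(s,a) inner difference identity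
  have hinner : ∀ s a,
      ((∑ s', P' s a s' * (r s a s' + γ * Vval Pφ π r γ s')) -
        ∑ s', Pφ s a s' * (r s a s' + γ * Vval Pφ π r γ s')) -
      ((∑ s', P' s a s' * (r s a s' + γ * Vval Pφ' π r γ s')) -
        ∑ s', Pφ s a s' * (r s a s' + γ * Vval Pφ' π r γ s'))
      = γ * ∑ s', (P' s a s' - Pφ s a s') * (Vval Pφ π r γ s' - Vval Pφ' π r γ s') := by
    intro s a
    rw [Finset.mul_sum, ← Finset.sum_sub_distrib, ← Finset.sum_sub_distrib,
      ← Finset.sum_sub_distrib]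
    exact Finset.sum_congr rfl fun s' _ => by ring
  -- difference of the two gap summands
  have hgdiff : ∀ t,
      (∑ s, marginal P' π ρ t s * ∑ a, π s a *
        ((∑ s', P' s a s' * (r s a s' + γ * Vval Pφ π r γ s')) -
          ∑ s', Pφ s a s' * (r s a s' + γ * Vval Pφ π r γ s'))) -
      (∑ s, marginal P' π ρ t s * ∑ a, π s a *
        ((∑ s', P' s a s' * (r s a s' + γ * Vval Pφ' π r γ s')) -
          ∑ s', Pφ s a s' * (r s a s' + γ * Vval Pφ' π r γ s')))
      = ∑ s, marginal P' π ρ t s * ∑ a, π s a *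
          (γ * ∑ s', (P' s a s' - Pφ s a s') * (Vval Pφ π r γ s' - Vval Pφ' π r γ s')) := by
    intro t
    rw [← Finset.sum_sub_distrib]
    refine Finset.sum_congr rfl fun s _ => ?_
    rw [← mul_sub, ← Finset.sum_sub_distrib]
    congr 1
    refine Finset.sum_congr rfl fun a _ => ?_
    rw [← mul_sub, hinner s a]
  have hgdb : ∀ t,
      |(∑ s, marginal P' π ρ t s * ∑ a, π s a *
        ((∑ s', P' s a s' * (r s a s' + γ * Vval Pφ π r γ s')) -
          ∑ s', Pφ s a s' * (r s a s' + γ * Vval Pφ π r γ s'))) -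
      (∑ s, marginal P' π ρ t s * ∑ a, π s a *
        ((∑ s', P' s a s' * (r s a s' + γ * Vval Pφ' π r γ s')) -
          ∑ s', Pφ s a s' * (r s a s' + γ * Vval Pφ' π r γ s')))|
      ≤ γ * (2 * δ₁ * B) := by
    intro t
    rw [hgdiff t]
    refine weighted_abs_le (hμ t).1 (hμ t).2 fun s => ?_
    refine weighted_abs_le (hπ s).1 (hπ s).2 fun a => ?_
    rw [abs_mul, abs_of_nonneg hγ0]
    exact mul_le_mul_of_nonneg_left
      (tv_weighted_abs_le (hδ₁ s a) hB0 fun s' => hVb s') hγ0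
  -- the simulation identity
  have hid := sim_identity hP' hPφ hπ hρ hγ0 hγ1 hr (rmax := rmax)
  have hdiff : Summable (fun t =>
      (γ ^ t * ∑ s, marginal P' π ρ t s * ∑ a, π s a *
        ((∑ s', P' s a s' * (r s a s' + γ * Vval Pφ π r γ s')) -
          ∑ s', Pφ s a s' * (r s a s' + γ * Vval Pφ π r γ s'))) -
      γ ^ t * ∑ s, marginal P' π ρ t s * ∑ a, π s a *
        ((∑ s', P' s a s' * (r s a s' + γ * Vval Pφ' π r γ s')) -
          ∑ s', Pφ s a s' * (r s a s' + γ * Vval Pφ' π r γ s'))) := hfs.sub hfs'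
  have hsplit : Jret P' π r γ ρ - Jret Pφ π r γ ρ
      = (∑' t : ℕ, γ ^ t * ∑ s, marginal P' π ρ t s * ∑ a, π s a *
          ((∑ s', P' s a s' * (r s a s' + γ * Vval Pφ' π r γ s')) -
            ∑ s', Pφ s a s' * (r s a s' + γ * Vval Pφ' π r γ s')))
        + ∑' t : ℕ, ((γ ^ t * ∑ s, marginal P' π ρ t s * ∑ a, π s a *
          ((∑ s', P' s a s' * (r s a s' + γ * Vval Pφ π r γ s')) -
            ∑ s', Pφ s a s' * (r s a s' + γ * Vval Pφ π r γ s'))) -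
          γ ^ t * ∑ s, marginal P' π ρ t s * ∑ a, π s a *
          ((∑ s', P' s a s' * (r s a s' + γ * Vval Pφ' π r γ s')) -
            ∑ s', Pφ s a s' * (r s a s' + γ * Vval Pφ' π r γ s'))) := by
    rw [hid, ← Summable.tsum_add hfs' hdiff]
    exact tsum_congr fun t => by ring
  -- bound the error tsum
  have herr : |∑' t : ℕ, ((γ ^ t * ∑ s, marginal P' π ρ t s * ∑ a, π s a *
        ((∑ s', P' s a s' * (r s a s' + γ * Vval Pφ π r γ s')) -
          ∑ s', Pφ s a s' * (r s a s' + γ * Vval Pφ π r γ s'))) -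
        γ ^ t * ∑ s, marginal P' π ρ t s * ∑ a, π s a *
        ((∑ s', P' s a s' * (r s a s' + γ * Vval Pφ' π r γ s')) -
          ∑ s', Pφ s a s' * (r s a s' + γ * Vval Pφ' π r γ s')))|
      ≤ γ * (2 * δ₁ * B) / (1 - γ) := by
    have heq : ∀ t : ℕ, (γ ^ t * ∑ s, marginal P' π ρ t s * ∑ a, π s a *
        ((∑ s', P' s a s' * (r s a s' + γ * Vval Pφ π r γ s')) -
          ∑ s', Pφ s a s' * (r s a s' + γ * Vval Pφ π r γ s'))) -
        γ ^ t * ∑ s, marginal P' π ρ t s * ∑ a, π s a *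
        ((∑ s', P' s a s' * (r s a s' + γ * Vval Pφ' π r γ s')) -
          ∑ s', Pφ s a s' * (r s a s' + γ * Vval Pφ' π r γ s'))
        = γ ^ t * ((∑ s, marginal P' π ρ t s * ∑ a, π s a *
        ((∑ s', P' s a s' * (r s a s' + γ * Vval Pφ π r γ s')) -
          ∑ s', Pφ s a s' * (r s a s' + γ * Vval Pφ π r γ s'))) -
        ∑ s, marginal P' π ρ t s * ∑ a, π s a *
        ((∑ s', P' s a s' * (r s a s' + γ * Vval Pφ' π r γ s')) -
          ∑ s', Pφ s a s' * (r s a s' + γ * Vval Pφ' π r γ s'))) := fun t => by ring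
    rw [tsum_congr heq]
    exact tsum_geom_bound hγ0 hγ1 fun t => hgdb t
  -- final arithmetic
  have harith : γ * (2 * δ₁ * B) / (1 - γ)
      ≤ 4 * γ * δ₁ * rmax / (1 - γ) ^ 2 * min (δ₁ * (γ ^ 2 + 1) / (1 - γ)) 1 := by
    have hC : 0 ≤ 4 * γ * δ₁ * rmax / (1 - γ) ^ 2 := by positivity
    have hk : 0 ≤ γ * (2 * δ₁) / (1 - γ) := by positivity
    rw [mul_min_of_nonneg _ _ hC]
    refine le_min ?_ ?_
    · calc γ * (2 * δ₁ * B) / (1 - γ)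
          ≤ γ * (2 * δ₁ * (2 * δ₁ * rmax / (1 - γ) ^ 2)) / (1 - γ) := by
            gcongr
            exact min_le_left _ _
        _ = 4 * γ * δ₁ * rmax / (1 - γ) ^ 2 * (δ₁ / (1 - γ)) := by
            field_simp
            ring
        _ ≤ 4 * γ * δ₁ * rmax / (1 - γ) ^ 2 * (δ₁ * (γ ^ 2 + 1) / (1 - γ)) := by
            refine mul_le_mul_of_nonneg_left ?_ hC
            gcongr
            nlinarith [sq_nonneg γ]
    · calc γ * (2 * δ₁ * B) / (1 - γ)
          ≤ γ * (2 * δ₁ * (2 * (rmax / (1 - γ)))) / (1 - γ) := by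
            gcongr
            exact min_le_right _ _
        _ = 4 * γ * δ₁ * rmax / (1 - γ) ^ 2 * 1 := by
            field_simp
            ring
  calc |Jret P' π r γ ρ - Jret Pφ π r γ ρ|
      ≤ |∑' t : ℕ, γ ^ t * ∑ s, marginal P' π ρ t s * ∑ a, π s a *
          ((∑ s', P' s a s' * (r s a s' + γ * Vval Pφ' π r γ s')) -
            ∑ s', Pφ s a s' * (r s a s' + γ * Vval Pφ' π r γ s'))|
        + γ * (2 * δ₁ * B) / (1 - γ) := by
        rw [hsplit]
        exact (abs_add_le _ _).trans (add_le_add (le_refl _) herr)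
    _ ≤ _ := add_le_add (le_refl _) harith
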